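/- Let τ ∈ ℂ with Im τ > 0, let ε, δ ∈ {0,1}, let v ∈ ℂ, and let p = (mτ + n)/2 for some integers m, n (a half-period). Then θ[ε;δ](τ, 3v + p) · θ[ε;δ](τ, v − p)³ = θ[ε;δ](τ, 3v − p) · θ[ε;δ](τ, v + p)³. -/
import Mathlib


open Complex

/-- The genus-one theta function with characteristic `[ε; δ]`. -/
noncomputable def theta1 (ε δ : ℤ) (τ z : ℂ) : ℂ :=
  ∑' n : ℤ,
    Complex.exp (↑Real.pi * I * ((n : ℂ) + (ε : ℂ)/2)^2 * τ +
      2 * ↑Real.pi * I * ((n : ℂ) + (ε : ℂ)/2) * (z + (δ : ℂ)/2))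

lemma theta1_shift (ε δ : ℤ) (τ z : ℂ) (m n : ℤ) :
    theta1 ε δ τ (z + ((m : ℂ) * τ + (n : ℂ))) =
      Complex.exp (-(↑Real.pi * I) * ((m : ℂ)^2 * τ + 2 * m * z + m * δ - ε * n)) *
        theta1 ε δ τ z := by
  unfold theta1
  rw [← tsum_mul_left, ← (Equiv.subRight (m : ℤ)).tsum_eq]
  refine tsum_congr fun j => ?_
  simp only [Equiv.subRight_apply]
  rw [← Complex.exp_add]
  have key : ↑Real.pi * I * (((j - m : ℤ) : ℂ) + (ε : ℂ)/2)^2 * τ +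
      2 * ↑Real.pi * I * (((j - m : ℤ) : ℂ) + (ε : ℂ)/2) *
        (z + ((m : ℂ) * τ + (n : ℂ)) + (δ : ℂ)/2) =
      (-(↑Real.pi * I) * ((m : ℂ)^2 * τ + 2 * m * z + m * δ - ε * n) +
        (↑Real.pi * I * ((j : ℂ) + (ε : ℂ)/2)^2 * τ +
          2 * ↑Real.pi * I * ((j : ℂ) + (ε : ℂ)/2) * (z + (δ : ℂ)/2))) +
        ((n * (j - m) : ℤ) : ℂ) * (2 * ↑Real.pi * I) := by
    push_cast
    ring
  rw [key, Complex.exp_add, Complex.exp_int_mul_two_pi_mul_I, mul_one]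

/-- The identity `θ(3v+p)θ(v−p)³ = θ(3v−p)θ(v+p)³` for any half-period
`p = (mτ+n)/2`. -/
theorem stmt_17 (τ : ℂ) (hτ : 0 < τ.im) (ε δ : ℤ) (hε : ε = 0 ∨ ε = 1)
    (hδ : δ = 0 ∨ δ = 1) (v : ℂ) (m n : ℤ) :
    theta1 ε δ τ (3 * v + ((m : ℂ) * τ + (n : ℂ)) / 2) *
        theta1 ε δ τ (v - ((m : ℂ) * τ + (n : ℂ)) / 2) ^ 3 =
      theta1 ε δ τ (3 * v - ((m : ℂ) * τ + (n : ℂ)) / 2) *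
        theta1 ε δ τ (v + ((m : ℂ) * τ + (n : ℂ)) / 2) ^ 3 := by
  set p : ℂ := ((m : ℂ) * τ + (n : ℂ)) / 2 with hp
  have e1 : 3 * v + p = (3 * v - p) + ((m : ℂ) * τ + (n : ℂ)) := by
    rw [hp]; ring
  have e2 : v + p = (v - p) + ((m : ℂ) * τ + (n : ℂ)) := by
    rw [hp]; ring
  rw [e1, e2, theta1_shift, theta1_shift]
  have hfac : Complex.exp (-(↑Real.pi * I) * ((m : ℂ)^2 * τ + 2 * m * (3 * v - p) + m * δ - ε * n)) =
      Complex.exp (-(↑Real.pi * I) * ((m : ℂ)^2 * τ + 2 * m * (v - p) + m * δ - ε * n)) ^ 3 := by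
    rw [← Complex.exp_nat_mul]
    rw [show ((3 : ℕ) : ℂ) * (-(↑Real.pi * I) * ((m : ℂ)^2 * τ + 2 * m * (v - p) + m * δ - ε * n)) =
      -(↑Real.pi * I) * ((m : ℂ)^2 * τ + 2 * m * (3 * v - p) + m * δ - ε * n) +
        ((m * n - m * δ + ε * n : ℤ) : ℂ) * (2 * ↑Real.pi * I) by
        rw [hp]; push_cast; ring]
    rw [Complex.exp_add, Complex.exp_int_mul_two_pi_mul_I, mul_one]
  rw [hfac]
  ring
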